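/- Every tree T with maximum degree Δ ≥ 1 satisfies λ_{2,1}(T) ≤ Δ + 2; that is, T admits an L(2,1)-labeling using only labels in {0, 1, …, Δ+2}. -/

import Mathlib

open SimpleGraph Finset

namespace L21Aux

variable {V : Type*}

lemma habs2 (a b : ℕ) (h1 : a ≠ b) (h2 : a ≠ b + 1) (h3 : a ≠ b - 1) :
    2 ≤ |(a : ℤ) - b| := by
  rcases le_total (a : ℤ) b with h | h
  · rw [abs_sub_comm, abs_of_nonneg (by omega)]; omega
  · rw [abs_of_nonneg (by omega)]; omega

lemma habs1 (a b : ℕ) (h1 : a ≠ b) : 1 ≤ |(a : ℤ) - b| := by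
  rcases le_total (a : ℤ) b with h | h
  · rw [abs_sub_comm, abs_of_nonneg (by omega)]; omega
  · rw [abs_of_nonneg (by omega)]; omega

/-- Lift a walk whose support lies in `s` to the induced subgraph. -/
lemma lift_walk {G : SimpleGraph V} {s : Set V} {x y : V} (w : G.Walk x y)
    (hs : ∀ v ∈ w.support, v ∈ s) :
    ∃ w' : (G.induce s).Walk ⟨x, hs x w.start_mem_support⟩ ⟨y, hs y w.end_mem_support⟩,
      w'.length = w.length := by
  induction w with
  | nil => exact ⟨.nil, rfl⟩
  | @cons a b y h w ih =>
    obtain ⟨w', hw'⟩ := ih (fun v hv => hs v (by simp [hv]))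
    exact ⟨SimpleGraph.Walk.cons
      (show (G.induce s).Adj ⟨a, hs a (by simp)⟩ ⟨b, hs b (by simp)⟩ from h) w',
      by simp [hw']⟩

/-- In a path ending away from `L`, if `L` (a vertex with at most one neighbor)
is on the path then it is the start. -/
lemma leaf_eq_start {G : SimpleGraph V} {L : V}
    (hL : ∀ a b, G.Adj L a → G.Adj L b → a = b) :
    ∀ {x y : V} (w : G.Walk x y), w.IsPath → y ≠ L → L ∈ w.support → L = x := by
  intro x y w
  induction w with
  | nil => intro _ _ hm; simpa using (List.mem_singleton.mp hm)
  | @cons x b y h w ih =>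
    intro hw hy hm
    by_cases hx : L = x
    · exact hx
    · have hmb : L ∈ w.support := by
        rcases (SimpleGraph.Walk.mem_support_iff _).mp hm with h1 | h2
        · exact absurd h1 hx
        · exact h2
      have hLb : L = b := ih hw.of_cons hy hmb
      subst hLb
      cases w with
      | nil => exact absurd rfl hy
      | @cons _ u _ h2 w2 =>
        have hxu : x = u := hL _ _ h.symm h2
        have hnot : x ∉ (SimpleGraph.Walk.cons h2 w2).support :=
          (SimpleGraph.Walk.cons_isPath_iff _ _).mp hw |>.2
        exact absurd (by rw [hxu]; simp) hnot

lemma leaf_not_mem_support {G : SimpleGraph V} {L : V}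
    (hL : ∀ a b, G.Adj L a → G.Adj L b → a = b)
    {x y : V} (w : G.Walk x y) (hw : w.IsPath) (hx : x ≠ L) (hy : y ≠ L) :
    ∀ v ∈ w.support, v ≠ L := by
  intro v hv hvL
  exact hx (leaf_eq_start hL w hw hy (hvL ▸ hv)).symm

lemma exists_leaf [Fintype V] (G : SimpleGraph V) [DecidableRel G.Adj]
    (hT : G.IsTree) (h2 : 2 ≤ Fintype.card V) : ∃ L, G.degree L = 1 := by
  classical
  have hdeg1 : ∀ v, 1 ≤ G.degree v := by
    intro v
    obtain ⟨w, hw⟩ := Fintype.exists_ne_of_one_lt_card (by omega) v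
    obtain ⟨p⟩ := hT.isConnected.preconnected v w
    have : ∃ u, G.Adj v u := by
      cases p with
      | nil => exact absurd rfl hw
      | cons h p => exact ⟨_, h⟩
    exact (G.degree_pos_iff_exists_adj v).mpr this
  by_contra hno
  push_neg at hno
  have hdeg2 : ∀ v, 2 ≤ G.degree v := by
    intro v; have := hdeg1 v; have := hno v; omega
  have hsum : ∑ v, G.degree v = 2 * G.edgeFinset.card :=
    G.sum_degrees_eq_twice_card_edges
  have hcard : G.edgeFinset.card + 1 = Fintype.card V := hT.card_edgeFinset
  have hge : 2 * Fintype.card V ≤ ∑ v, G.degree v := by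
    calc 2 * Fintype.card V = Fintype.card V * 2 := by ring
      _ = ∑ _v : V, 2 := by rw [Finset.sum_const, smul_eq_mul, Finset.card_univ]
      _ ≤ ∑ v, G.degree v := Finset.sum_le_sum fun v _ => hdeg2 v
  omega

end L21Aux

open L21Aux

def IsL21Labeling {V : Type*} (G : SimpleGraph V) (f : V → ℕ) : Prop :=
  (∀ x y, G.Adj x y → 2 ≤ |(f x : ℤ) - (f y : ℤ)|) ∧
  (∀ x y, G.dist x y = 2 → 1 ≤ |(f x : ℤ) - (f y : ℤ)|)

lemma aux (n : ℕ) : ∀ (Δ : ℕ) {V : Type*} [Fintype V] (G : SimpleGraph V)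
    [DecidableRel G.Adj], Fintype.card V ≤ n → G.IsTree →
    (∀ v, G.degree v ≤ Δ) →
    ∃ f : V → ℕ, IsL21Labeling G f ∧ ∀ v, f v ≤ Δ + 2 := by
  induction n with
  | zero =>
    intro Δ V _ G _ hc _ _
    have : IsEmpty V := Fintype.card_eq_zero_iff.mp (le_antisymm hc (Nat.zero_le _))
    exact ⟨fun _ => 0, ⟨fun x => (this.false x).elim, fun x => (this.false x).elim⟩,
      fun x => (this.false x).elim⟩
  | succ n ih =>
    intro Δ V _ G _ hc hT hdegΔ
    classical
    by_cases hcard : Fintype.card V ≤ 1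
    · refine ⟨fun _ => 0, ⟨?_, ?_⟩, fun _ => Nat.zero_le _⟩
      · intro x y hxy
        have hxyeq : x = y := Fintype.card_le_one_iff.mp hcard x y
        subst hxyeq
        exact absurd hxy G.irrefl
      · intro x y hxy
        rw [Fintype.card_le_one_iff.mp hcard x y, SimpleGraph.dist_self] at hxy
        omega
    · push_neg at hcard
      obtain ⟨L, hL⟩ := exists_leaf G hT hcard
      obtain ⟨p, hp⟩ := Finset.card_eq_one.mp (hL ▸ rfl : (G.neighborFinset L).card = 1)
      have hadjL : ∀ a, G.Adj L a → a = p := by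
        intro a ha
        have : a ∈ G.neighborFinset L := by simpa using ha
        simpa [hp] using this
      have hadjLp : G.Adj L p := by
        have : p ∈ G.neighborFinset L := by simp [hp]
        simpa using this
      have huniq : ∀ a b, G.Adj L a → G.Adj L b → a = b := fun a b ha hb =>
        (hadjL a ha).trans (hadjL b hb).symm
      have hpL : p ≠ L := (G.ne_of_adj hadjLp).symm
      set s : Set V := {v | v ≠ L} with hs
      set G' : SimpleGraph s := G.induce s with hG'
      -- cardinality
      have hcards : Fintype.card s = Fintype.card V - 1 := by
        have : Fintype.card s = Fintype.card {v // v ≠ L} := rfl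
        rw [this, Fintype.card_subtype_compl, Fintype.card_subtype_eq]
      -- support avoidance for paths between vertices of s
      have havoid : ∀ {x y : V} (w : G.Walk x y), w.IsPath → x ≠ L → y ≠ L →
          ∀ v ∈ w.support, v ∈ s := by
        intro x y w hw hx hy v hv
        exact leaf_not_mem_support huniq w hw hx hy v hv
      -- G' is preconnected
      have hreach : ∀ x y : s, ∃ w' : G'.Walk x y, True := by
        rintro ⟨x, hx⟩ ⟨y, hy⟩
        obtain ⟨w⟩ := hT.isConnected.preconnected x y
        obtain ⟨w', _⟩ := lift_walk w.toPath (havoid _ w.toPath.isPath hx hy)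
        exact ⟨w', trivial⟩
      have hconn' : G'.Connected := by
        have : Nonempty s := ⟨⟨p, hpL⟩⟩
        exact SimpleGraph.Connected.mk (fun x y => ⟨(hreach x y).choose⟩)
      have hT' : G'.IsTree := by
        refine ⟨hconn', ?_⟩
        intro v c hc
        have hcm : ((c.map (SimpleGraph.Embedding.induce s).toHom)).IsCycle :=
          (SimpleGraph.Walk.map_isCycle_iff_of_injective
            (Subtype.val_injective : Function.Injective
              ((SimpleGraph.Embedding.induce (G := G) s).toHom : s → V))).mpr hc
        exact (hT.IsAcyclic _ hcm).elim
      -- degrees in G'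
      have hdeg' : ∀ v : s, G'.degree v ≤ G.degree v.1 := by
        intro v
        apply Finset.card_le_card_of_injOn Subtype.val
        · intro u hu
          simp only [Finset.mem_coe, SimpleGraph.mem_neighborFinset] at hu ⊢
          exact hu
        · exact Subtype.val_injective.injOn
      have hdegp' : G'.degree ⟨p, hpL⟩ ≤ Δ - 1 := by
        have hsub : (G'.neighborFinset ⟨p, hpL⟩).image Subtype.val ⊆
            (G.neighborFinset p).erase L := by
          intro u hu
          simp only [Finset.mem_image] at hu
          obtain ⟨⟨u, huL⟩, hu1, rfl⟩ := hu
          simp only [SimpleGraph.mem_neighborFinset] at hu1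
          simp only [Finset.mem_erase, SimpleGraph.mem_neighborFinset]
          exact ⟨huL, hu1⟩
        have h1 : (G'.neighborFinset ⟨p, hpL⟩).card ≤ ((G.neighborFinset p).erase L).card := by
          rw [← Finset.card_image_of_injective _ Subtype.val_injective]
          exact Finset.card_le_card hsub
        have h2 : ((G.neighborFinset p).erase L).card = G.degree p - 1 := by
          rw [Finset.card_erase_of_mem (by simpa using hadjLp.symm)]; rfl
        have := hdegΔ p
        unfold SimpleGraph.degree at *
        omega
      -- apply induction hypothesis
      obtain ⟨f', ⟨hf'adj, hf'dist⟩, hf'le⟩ := ih Δ G' (by omega) hT'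
        (fun v => le_trans (hdeg' v) (hdegΔ v.1))
      -- choose label for L
      set p' : s := ⟨p, hpL⟩ with hp'
      set F : Finset ℕ := insert (f' p') (insert (f' p' + 1) (insert (f' p' - 1)
        ((G'.neighborFinset p').image f'))) with hF
      have hΔ1 : 1 ≤ Δ := le_trans (by omega : 1 ≤ G.degree L) (hdegΔ L)
      have hFcard : F.card < Δ + 3 := by
        have h1 : F.card ≤ 3 + ((G'.neighborFinset p').image f').card := by
          have ha := Finset.card_insert_le (f' p') (insert (f' p' + 1)
            (insert (f' p' - 1) ((G'.neighborFinset p').image f')))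
          have hb := Finset.card_insert_le (f' p' + 1)
            (insert (f' p' - 1) ((G'.neighborFinset p').image f'))
          have hcc := Finset.card_insert_le (f' p' - 1) ((G'.neighborFinset p').image f')
          rw [hF]
          omega
        have h2 : ((G'.neighborFinset p').image f').card ≤ G'.degree p' :=
          Finset.card_image_le
        have := hdegp'
        omega
      have hex : ∃ c ∈ Finset.range (Δ + 3), c ∉ F := by
        rw [← Finset.not_subset]
        intro hsub
        have := Finset.card_le_card hsub
        simp only [Finset.card_range] at this
        omega
      obtain ⟨c, hcmem, hcF⟩ := hex
      have hcle : c ≤ Δ + 2 := by have := Finset.mem_range.mp hcmem; omega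
      have hc1 : c ≠ f' p' := fun h => hcF (by simp [hF, h])
      have hc2 : c ≠ f' p' + 1 := fun h => hcF (by simp [hF, h])
      have hc3 : c ≠ f' p' - 1 := fun h => hcF (by simp [hF, h])
      have hcnb : ∀ u : s, G'.Adj p' u → c ≠ f' u := by
        intro u hu h
        refine hcF ?_
        simp only [hF, Finset.mem_insert]
        right; right; right
        exact Finset.mem_image.mpr ⟨u, by simpa using hu, h.symm⟩
      -- the labeling
      set f : V → ℕ := fun v => if h : v = L then c else f' ⟨v, h⟩ with hfdef
      have hfL : f L = c := by simp [hfdef]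
      have hfv : ∀ (v : V) (h : v ≠ L), f v = f' ⟨v, h⟩ := by
        intro v h; simp [hfdef, h]
      -- distances in G' agree with G for vertices away from L
      have hdist2 : ∀ (x y : V) (hx : x ≠ L) (hy : y ≠ L), G.dist x y = 2 →
          G'.dist ⟨x, hx⟩ ⟨y, hy⟩ = 2 := by
        intro x y hx hy hd
        obtain ⟨w, hwp, hwl⟩ := (hT.isConnected.preconnected x y).exists_path_of_dist
        rw [hd] at hwl
        obtain ⟨w', hw'l⟩ := lift_walk w (havoid w hwp hx hy)
        have hle : G'.dist ⟨x, hx⟩ ⟨y, hy⟩ ≤ 2 := by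
          rw [← hwl, ← hw'l]; exact SimpleGraph.dist_le w'
        obtain ⟨u, hu⟩ := (w'.reachable).exists_walk_length_eq_dist
        have h2 : G.dist x y ≤ (u.map (SimpleGraph.Embedding.induce s).toHom).length :=
          SimpleGraph.dist_le _
        rw [SimpleGraph.Walk.length_map, hu] at h2
        have hge : 2 ≤ G'.dist ⟨x, hx⟩ ⟨y, hy⟩ := hd ▸ h2
        omega
      refine ⟨f, ⟨?_, ?_⟩, ?_⟩
      · -- adjacency condition
        intro x y hxy
        by_cases hx : x = L
        · rw [hx] at hxy ⊢
          have hy : y ≠ L := (G.ne_of_adj hxy).symm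
          have hyp : y = p := hadjL y hxy
          rw [hfL, hfv y hy]
          have : (⟨y, hy⟩ : s) = p' := Subtype.ext hyp
          rw [this]
          exact habs2 c (f' p') hc1 hc2 hc3
        · by_cases hy : y = L
          · rw [hy] at hxy ⊢
            have hx' : x ≠ L := hx
            have hxp : x = p := hadjL x hxy.symm
            rw [hfL, hfv x hx', abs_sub_comm]
            have : (⟨x, hx'⟩ : s) = p' := Subtype.ext hxp
            rw [this]
            exact habs2 c (f' p') hc1 hc2 hc3
          · rw [hfv x hx, hfv y hy]
            exact hf'adj ⟨x, hx⟩ ⟨y, hy⟩ hxy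
      · -- distance-2 condition
        intro x y hd
        have hxy : x ≠ y := by rintro rfl; rw [SimpleGraph.dist_self] at hd; omega
        -- helper: if dist L y = 2 then y is a neighbor of p, y ≠ L
        have key : ∀ (y : V), G.dist L y = 2 → ∃ (hy : y ≠ L), G.Adj p y := by
          intro y hd
          have hy : y ≠ L := by rintro rfl; rw [SimpleGraph.dist_self] at hd; omega
          obtain ⟨w, hw⟩ := (SimpleGraph.Reachable.of_dist_ne_zero
            (by omega : G.dist L y ≠ 0)).exists_walk_length_eq_dist
          rw [hd] at hw
          cases w with
          | nil => simp at hw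
          | @cons _ b _ h w2 =>
            cases w2 with
            | nil => simp at hw
            | @cons _ d _ h2 w3 =>
              have : w3.length = 0 := by simp only [SimpleGraph.Walk.length_cons] at hw; omega
              have hdy : d = y := SimpleGraph.Walk.eq_of_length_eq_zero this
              have hbp : b = p := hadjL b h
              subst hdy; subst hbp
              exact ⟨hy, h2⟩
        by_cases hx : x = L
        · rw [hx] at hd ⊢
          obtain ⟨hy, hpy⟩ := key y hd
          rw [hfL, hfv y hy]
          exact habs1 c _ (hcnb ⟨y, hy⟩ hpy)
        · by_cases hy : y = L
          · rw [hy] at hd ⊢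
            rw [SimpleGraph.dist_comm] at hd
            obtain ⟨hx', hpx⟩ := key x hd
            rw [hfL, hfv x hx', abs_sub_comm]
            exact habs1 c _ (hcnb ⟨x, hx'⟩ hpx)
          · rw [hfv x hx, hfv y hy]
            exact hf'dist ⟨x, hx⟩ ⟨y, hy⟩ (hdist2 x y hx hy hd)
      · intro v
        by_cases hv : v = L
        · subst hv; rw [hfL]; exact hcle
        · rw [hfv v hv]; exact hf'le _

theorem stmt4 {V : Type*} [Fintype V] (G : SimpleGraph V) [DecidableRel G.Adj]
    (hT : G.IsTree) (hΔ : 1 ≤ G.maxDegree) :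
    ∃ f : V → ℕ, IsL21Labeling G f ∧ ∀ v, f v ≤ G.maxDegree + 2 :=
  aux (Fintype.card V) G.maxDegree G le_rfl hT (fun v => G.degree_le_maxDegree v)
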